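/- Let m = 2^a · b be a positive even integer with a > 0 and b odd. Then the number of matrices [[x, y], [0, z]] with integer entries satisfying xz = m, 0 ≤ y < z, gcd(x, y, z) = 1, and x odd, equals 2^a · ψ(b), where ψ(n) = n · ∏_{p | n, p prime} (1 + 1/p). -/

import Mathlib

/-- The Dedekind psi function `ψ(n) = n · ∏_{p | n, p prime} (1 + 1/p)`. -/
def dedekindPsi (n : ℕ) : ℕ :=
  (n / n.primeFactors.prod id) * n.primeFactors.prod (fun p => p + 1)

namespace CountM1

/-- local 2-variable function -/
def hfun (x z : ℕ) : ℕ := (z / Nat.gcd x z) * Nat.totient (Nat.gcd x z)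

def F (n : ℕ) : ℕ := ∑ p ∈ n.divisorsAntidiagonal, hfun p.1 p.2

lemma gcd_mul_split {x₁ z₁ x₂ z₂ : ℕ} (cop : Nat.Coprime (x₁ * z₁) (x₂ * z₂)) :
    Nat.gcd (x₁ * x₂) (z₁ * z₂) = Nat.gcd x₁ z₁ * Nat.gcd x₂ z₂ := by
  have cz : Nat.Coprime z₁ z₂ :=
    (cop.coprime_dvd_left (dvd_mul_left _ _)).coprime_dvd_right (dvd_mul_left _ _)
  have cx2z1 : Nat.Coprime x₂ z₁ :=
    ((cop.symm.coprime_dvd_left (dvd_mul_right _ _)).coprime_dvd_right (dvd_mul_left _ _))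
  have cx1z2 : Nat.Coprime x₁ z₂ :=
    ((cop.coprime_dvd_left (dvd_mul_right _ _)).coprime_dvd_right (dvd_mul_left _ _))
  rw [cz.gcd_mul (x₁ * x₂), cx2z1.gcd_mul_right_cancel x₁, cx1z2.gcd_mul_left_cancel x₂]

lemma hfun_mul {x₁ z₁ x₂ z₂ : ℕ} (cop : Nat.Coprime (x₁ * z₁) (x₂ * z₂)) :
    hfun (x₁ * x₂) (z₁ * z₂) = hfun x₁ z₁ * hfun x₂ z₂ := by
  have cz : Nat.Coprime z₁ z₂ :=
    (cop.coprime_dvd_left (dvd_mul_left _ _)).coprime_dvd_right (dvd_mul_left _ _)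
  have hd1 : Nat.gcd x₁ z₁ ∣ z₁ := Nat.gcd_dvd_right _ _
  have hd2 : Nat.gcd x₂ z₂ ∣ z₂ := Nat.gcd_dvd_right _ _
  have cd : Nat.Coprime (Nat.gcd x₁ z₁) (Nat.gcd x₂ z₂) :=
    (cz.coprime_dvd_left hd1).coprime_dvd_right hd2
  unfold hfun
  rw [gcd_mul_split cop, ← Nat.div_mul_div_comm hd1 hd2, Nat.totient_mul cd]
  ring

end CountM1

namespace CountM1

lemma F_mult {m n : ℕ} (cop : Nat.Coprime m n) : F (m * n) = F m * F n := by
  unfold F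
  rw [Finset.sum_mul_sum, ← Finset.sum_product']
  symm
  apply Finset.sum_nbij (fun p ↦ (p.1.1 * p.2.1, p.1.2 * p.2.2))
  · rintro ⟨⟨a1, a2⟩, ⟨b1, b2⟩⟩ h
    simp only [Nat.mem_divisorsAntidiagonal, Ne, Finset.mem_product] at h
    rcases h with ⟨⟨rfl, ha⟩, ⟨rfl, hb⟩⟩
    simp only [Nat.mem_divisorsAntidiagonal, Nat.mul_eq_zero, Ne]
    constructor
    · ring
    rw [Nat.mul_eq_zero] at *
    exact not_or_intro ha hb
  · simp only [Set.InjOn, Finset.mem_coe, Nat.mem_divisorsAntidiagonal, Ne, Finset.mem_product,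
      Prod.mk.injEq]
    rintro ⟨⟨a1, a2⟩, ⟨b1, b2⟩⟩ ⟨⟨rfl, ha⟩, ⟨rfl, hb⟩⟩ ⟨⟨c1, c2⟩, ⟨d1, d2⟩⟩ hcd h
    simp only [Prod.mk.injEq] at h
    ext <;> dsimp only
    · trans Nat.gcd (a1 * a2) (a1 * b1)
      · rw [Nat.gcd_mul_left, cop.coprime_mul_left.coprime_mul_right_right.gcd_eq_one, mul_one]
      · rw [← hcd.1.1, ← hcd.2.1] at cop
        rw [← hcd.1.1, h.1, Nat.gcd_mul_left,
          cop.coprime_mul_left.coprime_mul_right_right.gcd_eq_one, mul_one]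
    · trans Nat.gcd (a1 * a2) (a2 * b2)
      · rw [mul_comm, Nat.gcd_mul_left, cop.coprime_mul_right.coprime_mul_left_right.gcd_eq_one,
          mul_one]
      · rw [← hcd.1.1, ← hcd.2.1] at cop
        rw [← hcd.1.1, h.2, mul_comm, Nat.gcd_mul_left,
          cop.coprime_mul_right.coprime_mul_left_right.gcd_eq_one, mul_one]
    · trans Nat.gcd (b1 * b2) (a1 * b1)
      · rw [mul_comm, Nat.gcd_mul_right,
          cop.coprime_mul_right.coprime_mul_left_right.symm.gcd_eq_one, one_mul]
      · rw [← hcd.1.1, ← hcd.2.1] at cop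
        rw [← hcd.2.1, h.1, mul_comm c1 d1, Nat.gcd_mul_left,
          cop.coprime_mul_right.coprime_mul_left_right.symm.gcd_eq_one, mul_one]
    · trans Nat.gcd (b1 * b2) (a2 * b2)
      · rw [Nat.gcd_mul_right, cop.coprime_mul_left.coprime_mul_right_right.symm.gcd_eq_one,
          one_mul]
      · rw [← hcd.1.1, ← hcd.2.1] at cop
        rw [← hcd.2.1, h.2, Nat.gcd_mul_right,
          cop.coprime_mul_left.coprime_mul_right_right.symm.gcd_eq_one, one_mul]
  · simp only [Set.SurjOn, Set.subset_def, Finset.mem_coe, Nat.mem_divisorsAntidiagonal, Ne,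
      Finset.mem_product, Set.mem_image, exists_prop, Prod.mk.injEq]
    rintro ⟨b1, b2⟩ h
    dsimp at h
    use ((b1.gcd m, b2.gcd m), (b1.gcd n, b2.gcd n))
    rw [← cop.gcd_mul _, ← cop.gcd_mul _, ← h.1, Nat.gcd_mul_gcd_of_coprime_of_mul_eq_mul cop h.1,
      Nat.gcd_mul_gcd_of_coprime_of_mul_eq_mul cop.symm _]
    · rw [Nat.mul_eq_zero, not_or] at h
      simp [h.2.1, h.2.2]
    rw [mul_comm n m, h.1]
  · simp only [Nat.mem_divisorsAntidiagonal, Ne, Finset.mem_product]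
    rintro ⟨⟨a1, a2⟩, ⟨b1, b2⟩⟩ ⟨⟨rfl, ha⟩, ⟨rfl, hb⟩⟩
    dsimp only
    exact (hfun_mul cop).symm

end CountM1

namespace CountM1

lemma psi_one : dedekindPsi 1 = 1 := by simp [dedekindPsi]

lemma psi_prime_pow {p k : ℕ} (hp : p.Prime) (hk : 0 < k) :
    dedekindPsi (p ^ k) = p ^ k + p ^ (k - 1) := by
  unfold dedekindPsi
  rw [Nat.primeFactors_prime_pow hk.ne' hp]
  simp only [Finset.prod_singleton, id_eq]
  have h1 : p ^ k / p = p ^ (k - 1) := by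
    conv_lhs => rw [show k = (k-1)+1 by omega, pow_succ]
    exact Nat.mul_div_cancel _ hp.pos
  rw [h1, Nat.mul_add, mul_one, ← pow_succ, show k - 1 + 1 = k by omega]

lemma psi_mul {m n : ℕ} (cop : Nat.Coprime m n) (hm : m ≠ 0) (hn : n ≠ 0) :
    dedekindPsi (m * n) = dedekindPsi m * dedekindPsi n := by
  have key : (m*n) / ((m*n).primeFactors.prod id)
      = (m / m.primeFactors.prod id) * (n / n.primeFactors.prod id) := by
    rw [cop.primeFactors_mul, Finset.prod_union cop.disjoint_primeFactors]
    exact (Nat.div_mul_div_comm (Nat.prod_primeFactors_dvd m)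
      (Nat.prod_primeFactors_dvd n)).symm
  unfold dedekindPsi
  rw [key, cop.primeFactors_mul, Finset.prod_union cop.disjoint_primeFactors]
  ring

lemma tele {p : ℕ} (hp : 0 < p) : ∀ n : ℕ, ∑ i ∈ Finset.range n, (p ^ (i+1) - p ^ i) = p ^ n - 1
  | 0 => by simp
  | n + 1 => by
    rw [Finset.sum_range_succ, tele hp n]
    have h1 : 1 ≤ p ^ n := Nat.one_le_pow _ _ hp
    have h2 : p ^ n ≤ p ^ (n+1) := Nat.pow_le_pow_right hp (by omega)
    omega

lemma F_prime_pow {p k : ℕ} (hp : p.Prime) (hk : 0 < k) :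
    F (p ^ k) = p ^ k + p ^ (k - 1) := by
  unfold F
  rw [Nat.sum_divisorsAntidiagonal (fun x z => hfun x z), Nat.sum_divisors_prime_pow hp]
  have hterm : ∀ j, 1 ≤ j → j ≤ k - 1 →
      hfun (p ^ j) (p ^ k / p ^ j) = p ^ (k - j) - p ^ (k - j - 1) := by
    intro j hj1 hj2
    have hdiv : p ^ k / p ^ j = p ^ (k - j) := Nat.pow_div (by omega) hp.pos
    rw [hdiv]
    unfold hfun
    rcases le_total j (k - j) with hle | hle
    · have hg : Nat.gcd (p ^ j) (p ^ (k - j)) = p ^ j :=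
        Nat.gcd_eq_left (pow_dvd_pow p hle)
      rw [hg, Nat.pow_div hle hp.pos, Nat.totient_prime_pow hp (by omega)]
      have : p ^ (k - j - j) * (p ^ (j - 1) * (p - 1)) = p ^ (k - j - 1) * (p - 1) := by
        rw [← mul_assoc, ← pow_add, show k - j - j + (j - 1) = k - j - 1 by omega]
      rw [this, Nat.mul_sub, mul_one, ← pow_succ, show k - j - 1 + 1 = k - j by omega]
    · have hg : Nat.gcd (p ^ j) (p ^ (k - j)) = p ^ (k - j) :=
        Nat.gcd_eq_right (pow_dvd_pow p hle)
      rw [hg, Nat.div_self (pow_pos hp.pos _), one_mul,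
        Nat.totient_prime_pow hp (by omega)]
      rw [Nat.mul_sub, mul_one, ← pow_succ, show k - j - 1 + 1 = k - j by omega]
  obtain ⟨K, rfl⟩ : ∃ K, k = K + 1 := ⟨k - 1, by omega⟩
  simp only [Nat.add_sub_cancel] at hterm ⊢
  rw [Finset.sum_range_succ', Finset.sum_range_succ]
  have hf0 : hfun (p ^ 0) (p ^ (K+1) / p ^ 0) = p ^ (K+1) := by
    simp [hfun]
  have hfk : hfun (p ^ (K+1)) (p ^ (K+1) / p ^ (K+1)) = 1 := by
    rw [Nat.div_self (pow_pos hp.pos _)]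
    simp [hfun]
  rw [hf0, hfk]
  have hmid : ∑ i ∈ Finset.range K, hfun (p ^ (i+1)) (p ^ (K+1) / p ^ (i+1)) = p ^ K - 1 := by
    have hicnt : ∀ i ∈ Finset.range K, hfun (p ^ (i+1)) (p ^ (K+1) / p ^ (i+1))
        = (fun j => p ^ (j+1) - p ^ j) (K - 1 - i) := by
      intro i hi
      rw [Finset.mem_range] at hi
      rw [hterm (i+1) (by omega) (by omega)]
      simp only
      congr 1 <;> congr 1 <;> omega
    rw [Finset.sum_congr rfl hicnt, Finset.sum_range_reflect
      (fun j => p ^ (j+1) - p ^ j) K, tele hp.pos K]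
  rw [hmid]
  have h1 : 1 ≤ p ^ K := Nat.one_le_pow _ _ hp.pos
  omega

end CountM1

namespace CountM1

lemma F_one : F 1 = 1 := by
  simp [F, hfun]

lemma F_eq : ∀ n : ℕ, 0 < n → F n = dedekindPsi n := by
  intro n
  induction n using Nat.recOnPosPrimePosCoprime with
  | prime_pow p k hp hk =>
    intro _
    rw [F_prime_pow hp hk, psi_prime_pow hp hk]
  | zero => intro h; omega
  | one => intro _; rw [F_one, psi_one]
  | coprime a b ha hb hab iha ihb =>
    intro _
    rw [F_mult hab, psi_mul hab (by omega) (by omega), iha (by omega), ihb (by omega)]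

end CountM1

namespace CountM1

lemma count_coprime_block (d : ℕ) : ∀ k : ℕ,
    ((Finset.range (d * k)).filter (fun y => d.Coprime y)).card = k * d.totient
  | 0 => by simp
  | k + 1 => by
    have hsplit : Finset.range (d * (k+1)) = Finset.range (d * k) ∪ Finset.Ico (d*k) (d*k + d) := by
      rw [Finset.range_eq_Ico, Finset.range_eq_Ico,
        Finset.Ico_union_Ico_eq_Ico (by omega) (by omega), Nat.mul_succ]
    have hdisj : Disjoint ((Finset.range (d * k)).filter (fun y => d.Coprime y))
        ((Finset.Ico (d*k) (d*k + d)).filter (fun y => d.Coprime y)) := by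
      apply Finset.disjoint_filter_filter
      rw [Finset.range_eq_Ico]
      exact Finset.Ico_disjoint_Ico_consecutive _ _ _
    rw [hsplit, Finset.filter_union, Finset.card_union_of_disjoint hdisj,
      count_coprime_block d k, Nat.filter_coprime_Ico_eq_totient d (d*k)]
    ring

lemma count_coprime {d z : ℕ} (hd : d ∣ z) :
    ((Finset.range z).filter (fun y => d.Coprime y)).card = (z / d) * d.totient := by
  obtain ⟨k, rfl⟩ := hd
  rcases Nat.eq_zero_or_pos d with rfl | hd0
  · simp
  rw [Nat.mul_div_cancel_left _ hd0, count_coprime_block d k]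

end CountM1

namespace CountM1

lemma hfun_two_pow {x w a : ℕ} (hx : Odd x) : hfun x (2^a * w) = 2^a * hfun x w := by
  have cop : Nat.Coprime (2^a) x := (Nat.coprime_two_left.mpr hx).pow_left a
  have hg : Nat.gcd x (2^a * w) = Nat.gcd x w := cop.gcd_mul_left_cancel_right w
  unfold hfun
  rw [hg, Nat.mul_div_assoc _ (Nat.gcd_dvd_right x w), mul_assoc]

lemma sum_odd_divisors {a b : ℕ} (hb : Odd b) :
    (∑ p ∈ (2^a * b).divisorsAntidiagonal, if Odd p.1 then hfun p.1 p.2 else 0)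
      = 2^a * dedekindPsi b := by
  have hb0 : b ≠ 0 := by rintro rfl; simp [Nat.odd_iff] at hb
  rw [Nat.sum_divisorsAntidiagonal (fun x z => if Odd x then hfun x z else 0),
    ← Finset.sum_filter]
  have hset : (2^a * b).divisors.filter (fun x => Odd x) = b.divisors := by
    ext x
    simp only [Finset.mem_filter, Nat.mem_divisors]
    constructor
    · rintro ⟨⟨hdvd, -⟩, hodd⟩
      have cop : Nat.Coprime x (2^a) := (Nat.coprime_two_right.mpr hodd).pow_right a
      exact ⟨cop.dvd_of_dvd_mul_left hdvd, hb0⟩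
    · rintro ⟨hdvd, -⟩
      have hodd : Odd x := by
        rcases Nat.even_or_odd x with he | ho
        · exfalso
          have : (2 : ℕ) ∣ b := dvd_trans he.two_dvd hdvd
          rw [Nat.odd_iff] at hb
          omega
        · exact ho
      exact ⟨⟨hdvd.mul_left _, by positivity⟩, hodd⟩
  rw [hset]
  have hterm : ∀ x ∈ b.divisors, hfun x (2^a * b / x) = 2^a * hfun x (b / x) := by
    intro x hx
    rw [Nat.mem_divisors] at hx
    rw [Nat.mul_div_assoc _ hx.1]
    exact hfun_two_pow (by
      rcases Nat.even_or_odd x with he | ho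
      · exfalso
        have : (2 : ℕ) ∣ b := dvd_trans he.two_dvd hx.1
        rw [Nat.odd_iff] at hb
        omega
      · exact ho)
  rw [Finset.sum_congr rfl hterm, ← Finset.mul_sum]
  congr 1
  rw [← Nat.sum_divisorsAntidiagonal (fun x z => hfun x z)]
  exact F_eq b (Nat.pos_of_ne_zero hb0)

end CountM1

namespace CountM1

lemma gcd_rotate (x y z : ℕ) : Nat.gcd (Nat.gcd x y) z = Nat.gcd (Nat.gcd x z) y := by
  rw [Nat.gcd_assoc, Nat.gcd_comm y z, ← Nat.gcd_assoc]

def S (m : ℕ) : Finset ((ℕ × ℕ) × ℕ) :=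
  (m.divisorsAntidiagonal ×ˢ Finset.range m).filter
    fun q => Odd q.1.1 ∧ q.2 < q.1.2 ∧ Nat.gcd (Nat.gcd q.1.1 q.2) q.1.2 = 1

lemma S_card (m : ℕ) (hm0 : 0 < m) :
    (S m).card = ∑ p ∈ m.divisorsAntidiagonal, (if Odd p.1 then hfun p.1 p.2 else 0) := by
  unfold S
  rw [Finset.card_filter, Finset.sum_product]
  refine Finset.sum_congr rfl ?_
  rintro ⟨x, z⟩ hp
  rw [Nat.mem_divisorsAntidiagonal] at hp
  obtain ⟨hxz, hne⟩ := hp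
  have hzm : z ≤ m := Nat.le_of_dvd hm0 (Dvd.intro_left x hxz)
  by_cases hodd : Odd x
  · simp only [hodd, if_true, true_and]
    rw [← Finset.card_filter]
    have hswap : (Finset.range m).filter (fun y => y < z ∧ Nat.gcd (Nat.gcd x y) z = 1)
        = (Finset.range z).filter (fun y => (Nat.gcd x z).Coprime y) := by
      ext y
      simp only [Finset.mem_filter, Finset.mem_range]
      constructor
      · rintro ⟨-, hyz, hg⟩
        rw [gcd_rotate] at hg
        exact ⟨hyz, hg⟩
      · rintro ⟨hyz, hg⟩
        rw [Nat.Coprime, ← gcd_rotate] at hg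
        exact ⟨lt_of_lt_of_le hyz hzm, hyz, hg⟩
    rw [hswap, count_coprime (Nat.gcd_dvd_right x z)]
    rfl
  · simp [hodd]

end CountM1

namespace CountM1

lemma card_eq_S (m : ℕ) (hm0 : 0 < m) :
    Nat.card {M : Matrix (Fin 2) (Fin 2) ℤ //
        M 1 0 = 0 ∧ M 0 0 * M 1 1 = (m : ℤ) ∧ 0 ≤ M 0 1 ∧ M 0 1 < M 1 1 ∧
        Int.gcd (Int.gcd (M 0 0) (M 0 1)) (M 1 1) = 1 ∧ Odd (M 0 0)} = (S m).card := by
  classical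
  rw [← Fintype.card_coe (S m), ← Nat.card_eq_fintype_card]
  apply Nat.card_congr
  refine
    { toFun := fun M => ⟨(((M.1 0 0).toNat, (M.1 1 1).toNat), (M.1 0 1).toNat), ?_⟩
      invFun := fun q => ⟨!![(q.1.1.1 : ℤ), (q.1.2 : ℤ); 0, (q.1.1.2 : ℤ)], ?_⟩
      left_inv := ?_
      right_inv := ?_ }
  · obtain ⟨M, h10, h2, h3, h4, h5, h6⟩ := M
    have hz : (0 : ℤ) < M 1 1 := lt_of_le_of_lt h3 h4
    have hx : (0 : ℤ) < M 0 0 := by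
      rcases lt_trichotomy (M 0 0) 0 with h | h | h
      · nlinarith [Int.natCast_pos.mpr hm0]
      · rw [h] at h2; simp at h2; omega
      · exact h
    have hX : ((M 0 0).toNat : ℤ) = M 0 0 := Int.toNat_of_nonneg hx.le
    have hZ : ((M 1 1).toNat : ℤ) = M 1 1 := Int.toNat_of_nonneg hz.le
    have hY : ((M 0 1).toNat : ℤ) = M 0 1 := Int.toNat_of_nonneg h3
    simp only [S, Finset.mem_filter, Finset.mem_product, Nat.mem_divisorsAntidiagonal,
      Finset.mem_range]
    have hmul : (M 0 0).toNat * (M 1 1).toNat = m := by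
      have : (((M 0 0).toNat * (M 1 1).toNat : ℕ) : ℤ) = (m : ℤ) := by
        push_cast [hX, hZ]; exact h2
      exact_mod_cast this
    have hzm : (M 1 1).toNat ≤ m := Nat.le_of_dvd hm0 (Dvd.intro_left _ hmul)
    refine ⟨⟨⟨hmul, hm0.ne'⟩, by omega⟩, ?_, by omega, ?_⟩
    · rw [Nat.odd_iff]
      rw [Int.odd_iff] at h6
      omega
    · have : Int.gcd (↑(Int.gcd (M 0 0) (M 0 1))) (M 1 1)
          = Nat.gcd (Nat.gcd (M 0 0).natAbs (M 0 1).natAbs) (M 1 1).natAbs := by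
        rw [Int.gcd]
        simp [Int.gcd]
      rw [this] at h5
      have e1 : (M 0 0).natAbs = (M 0 0).toNat := by omega
      have e2 : (M 0 1).natAbs = (M 0 1).toNat := by omega
      have e3 : (M 1 1).natAbs = (M 1 1).toNat := by omega
      rw [e1, e2, e3] at h5
      exact h5
  · obtain ⟨⟨⟨x, z⟩, y⟩, hq⟩ := q
    simp only [S, Finset.mem_filter, Finset.mem_product, Nat.mem_divisorsAntidiagonal,
      Finset.mem_range] at hq
    obtain ⟨⟨⟨hxz, -⟩, -⟩, hodd, hyz, hgcd⟩ := hq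
    refine ⟨by simp, ?_, ?_, ?_, ?_, ?_⟩
    · show (x : ℤ) * (z : ℤ) = (m : ℤ)
      exact_mod_cast congrArg (Nat.cast : ℕ → ℤ) hxz
    · show (0 : ℤ) ≤ (y : ℤ)
      positivity
    · show (y : ℤ) < (z : ℤ)
      exact_mod_cast hyz
    · show Int.gcd (↑(Int.gcd (x : ℤ) (y : ℤ))) ((z : ℤ)) = 1
      rw [Int.gcd]
      simpa [Int.gcd] using hgcd
    · show Odd ((x : ℤ))
      exact_mod_cast hodd
  · rintro ⟨M, h10, h2, h3, h4, h5, h6⟩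
    have hz : (0 : ℤ) < M 1 1 := lt_of_le_of_lt h3 h4
    have hx : (0 : ℤ) < M 0 0 := by
      rcases lt_trichotomy (M 0 0) 0 with h | h | h
      · nlinarith [Int.natCast_pos.mpr hm0]
      · rw [h] at h2; simp at h2; omega
      · exact h
    apply Subtype.ext
    ext i j
    fin_cases i <;> fin_cases j <;>
      simp [Int.toNat_of_nonneg hx.le, Int.toNat_of_nonneg hz.le, Int.toNat_of_nonneg h3, h10]
  · rintro ⟨⟨⟨x, z⟩, y⟩, hq⟩
    apply Subtype.ext
    simp

end CountM1

/-- Lemma: for `m = 2^a·b` even (`a > 0`, `b` odd), the number of integer matrices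
`[[x, y], [0, z]]` with `xz = m`, `0 ≤ y < z`, `gcd(x,y,z) = 1` and `x` odd equals
`2^a · ψ(b)`. -/
theorem count_M1_eq (a b m : ℕ) (ha : 0 < a) (hb : Odd b) (hm : m = 2 ^ a * b) :
    Nat.card {M : Matrix (Fin 2) (Fin 2) ℤ //
        M 1 0 = 0 ∧ M 0 0 * M 1 1 = (m : ℤ) ∧ 0 ≤ M 0 1 ∧ M 0 1 < M 1 1 ∧
        Int.gcd (Int.gcd (M 0 0) (M 0 1)) (M 1 1) = 1 ∧ Odd (M 0 0)}
      = 2 ^ a * dedekindPsi b := by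
  subst hm
  have hb0 : 0 < b := hb.pos
  have hm0 : 0 < 2 ^ a * b := by positivity
  rw [CountM1.card_eq_S _ hm0, CountM1.S_card _ hm0, CountM1.sum_odd_divisors hb]
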